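/- Let d ≥ 2, 1 ≤ k ≤ d−1, let Z ⊆ ℝ^d be a convex open set, and let h : Z → ℝ^d be continuously differentiable with invertible differential at every point of Z. Let S₁, S₂ ⊆ {1,…,d} with |S₁| = |S₂| = d−k and S₁ ≠ S₂, and let T ⊆ {1,…,d} with |T| = d−k. Then it is impossible that for every i ∈ T the component h_i depends only on the coordinates in S₁ and also depends only on the coordinates in S₂. -/

import Mathlib

/-- A function `φ` defined on (a subset) `Z ⊆ ℝ^d` *depends only on the coordinates in `S`*
if `φ z = φ z'` for all `z, z' ∈ Z` agreeing on every coordinate in `S`. -/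
def DependsOnlyOn {d : ℕ} {Y : Type*} (Z : Set (Fin d → ℝ)) (φ : (Fin d → ℝ) → Y)
    (S : Set (Fin d)) : Prop :=
  ∀ z ∈ Z, ∀ z' ∈ Z, (∀ i ∈ S, z i = z' i) → φ z = φ z'

/-- If a component depends only on coordinates in `S` and `j ∉ S`, the directional
derivative in direction `e_j` vanishes. -/
lemma dir_deriv_zero {d : ℕ} {Z : Set (Fin d → ℝ)} (hZopen : IsOpen Z)
    {h : (Fin d → ℝ) → (Fin d → ℝ)} {z₀ : Fin d → ℝ} (hz₀ : z₀ ∈ Z)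
    (hdiff : HasFDerivAt h (fderiv ℝ h z₀) z₀)
    {S : Finset (Fin d)} {i j : Fin d}
    (hdepS : DependsOnlyOn Z (fun z => h z i) (S : Set (Fin d))) (hjS : j ∉ S) :
    fderiv ℝ h z₀ ((Pi.single j 1 : Fin d → ℝ)) i = 0 := by
  set D := fderiv ℝ h z₀ with hD
  have hcurve : HasDerivAt (fun t : ℝ => z₀ + t • (Pi.single j 1 : Fin d → ℝ))
      ((Pi.single j 1 : Fin d → ℝ)) 0 := by
    simpa using ((hasDerivAt_id (0 : ℝ)).smul_const ((Pi.single j 1 : Fin d → ℝ))).const_add z₀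
  have hc0 : HasDerivAt (fun t : ℝ => h (z₀ + t • (Pi.single j 1 : Fin d → ℝ)))
      (D ((Pi.single j 1 : Fin d → ℝ))) 0 := by
    have hdiff' : HasFDerivAt h D (z₀ + (0:ℝ) • (Pi.single j 1 : Fin d → ℝ)) := by
      simpa using hdiff
    exact hdiff'.comp_hasDerivAt 0 hcurve
  have hc : HasDerivAt (fun t : ℝ => h (z₀ + t • (Pi.single j 1 : Fin d → ℝ)) i)
      (D ((Pi.single j 1 : Fin d → ℝ)) i) 0 :=
    (ContinuousLinearMap.proj (R := ℝ) (φ := fun _ : Fin d => ℝ) i).hasFDerivAt.comp_hasDerivAt 0 hc0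
  have hcont : Continuous (fun t : ℝ => z₀ + t • (Pi.single j 1 : Fin d → ℝ)) := by continuity
  have hmem : ∀ᶠ t : ℝ in nhds 0, (z₀ + t • (Pi.single j 1 : Fin d → ℝ)) ∈ Z := by
    have h0 : (fun t : ℝ => z₀ + t • (Pi.single j 1 : Fin d → ℝ)) 0 = z₀ := by simp
    have := hcont.continuousAt (x := (0 : ℝ))
    exact this.preimage_mem_nhds (by simpa using hZopen.mem_nhds hz₀)
  have hev : (fun t : ℝ => h (z₀ + t • (Pi.single j 1 : Fin d → ℝ)) i)
      =ᶠ[nhds (0 : ℝ)] fun _ => h z₀ i := by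
    filter_upwards [hmem] with t ht
    exact hdepS _ ht _ hz₀ (fun i' hi' => by
      have : i' ≠ j := fun h' => hjS (h' ▸ hi')
      simp [Pi.single_apply, (this.symm : j ≠ i')])
  have hconst : HasDerivAt (fun _ : ℝ => h z₀ i) (D ((Pi.single j 1 : Fin d → ℝ)) i) 0 :=
    hev.hasDerivAt_iff.mp hc
  exact hconst.unique (hasDerivAt_const _ _)

/-- Let `d ≥ 2`, `1 ≤ k ≤ d − 1`, `Z ⊆ ℝ^d` a (nonempty) convex open set
and `h : Z → ℝ^d` continuously differentiable with invertible differential at every point.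
If `S₁ ≠ S₂` both have cardinality `d − k` and `T` has cardinality `d − k`, then it is
impossible that every component `hᵢ`, `i ∈ T`, depends only on the coordinates in `S₁` and
also only on the coordinates in `S₂`. -/
theorem mixture_exclusion {d k : ℕ} (hd : 2 ≤ d) (hk1 : 1 ≤ k) (hkd : k ≤ d - 1)
    {Z : Set (Fin d → ℝ)} (hZopen : IsOpen Z) (hZconv : Convex ℝ Z) (hZne : Z.Nonempty)
    (h : (Fin d → ℝ) → (Fin d → ℝ)) (hC1 : ContDiffOn ℝ 1 h Z)
    (hinv : ∀ z ∈ Z, Function.Bijective (fderiv ℝ h z))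
    (S₁ S₂ T : Finset (Fin d))
    (hS₁ : S₁.card = d - k) (hS₂ : S₂.card = d - k) (hS : S₁ ≠ S₂)
    (hT : T.card = d - k) :
    ¬ (∀ i ∈ T, DependsOnlyOn Z (fun z => h z i) (S₁ : Set (Fin d)) ∧
        DependsOnlyOn Z (fun z => h z i) (S₂ : Set (Fin d))) := by
  intro hdep
  obtain ⟨z₀, hz₀⟩ := hZne
  have hdiff : HasFDerivAt h (fderiv ℝ h z₀) z₀ :=
    ((hC1.contDiffAt (hZopen.mem_nhds hz₀)).differentiableAt one_ne_zero).hasFDerivAt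
  set D := fderiv ℝ h z₀ with hD
  set s : Finset (Fin d) := S₁ ∩ S₂ with hs
  -- Key: directional derivatives vanish for directions outside the intersection.
  have key : ∀ i ∈ T, ∀ j : Fin d, j ∉ s → D ((Pi.single j 1 : Fin d → ℝ)) i = 0 := by
    intro i hi j hj
    rcases not_and_or.mp (fun hc => hj (Finset.mem_inter.mpr hc)) with h1 | h2
    · exact dir_deriv_zero hZopen hz₀ hdiff (hdep i hi).1 h1
    · exact dir_deriv_zero hZopen hz₀ hdiff (hdep i hi).2 h2
  -- Hence vectors supported off `s` map into vectors vanishing on `T`.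
  have key2 : ∀ v : Fin d → ℝ, (∀ j ∈ s, v j = 0) → ∀ i ∈ T, D v i = 0 := by
    intro v hv i hi
    have hv' : v = ∑ j : Fin d, v j • (Pi.single j 1 : Fin d → ℝ) := by
      ext i'
      simp [Pi.single_apply]
    rw [hv', map_sum]
    rw [Finset.sum_apply]
    apply Finset.sum_eq_zero
    intro j _
    by_cases hj : j ∈ s
    · simp [hv j hj]
    · simp [key i hi j hj]
  -- Build an injective linear map from functions on `sᶜ` to functions on `Tᶜ`.
  let ext : ({j : Fin d // j ∉ s} → ℝ) →ₗ[ℝ] (Fin d → ℝ) :=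
    LinearMap.pi (fun j => if hjs : j ∈ s then 0 else LinearMap.proj ⟨j, hjs⟩)
  let prj : (Fin d → ℝ) →ₗ[ℝ] ({i : Fin d // i ∉ T} → ℝ) :=
    LinearMap.pi (fun i => LinearMap.proj (i : Fin d))
  let G : ({j : Fin d // j ∉ s} → ℝ) →ₗ[ℝ] ({i : Fin d // i ∉ T} → ℝ) :=
    prj ∘ₗ (D : (Fin d → ℝ) →L[ℝ] (Fin d → ℝ)).toLinearMap ∘ₗ ext
  have hext : ∀ (x : {j : Fin d // j ∉ s} → ℝ) (j : Fin d),
      ext x j = if hjs : j ∈ s then 0 else x ⟨j, hjs⟩ := by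
    intro x j
    by_cases hj : j ∈ s <;> simp [ext, LinearMap.pi_apply, hj]
  have hGinj : Function.Injective G := by
    rw [← LinearMap.ker_eq_bot, LinearMap.ker_eq_bot']
    intro x hx
    have hv0 : ∀ j ∈ s, ext x j = 0 := by
      intro j hj; rw [hext]; simp [hj]
    have hDv : D (ext x) = 0 := by
      ext i
      by_cases hiT : i ∈ T
      · simpa using key2 _ hv0 i hiT
      · have := congrFun hx ⟨i, hiT⟩
        simpa [G, prj] using this
    have hzero : ext x = 0 := (hinv z₀ hz₀).1 (by simpa using hDv)
    ext j
    have := congrFun hzero (j : Fin d)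
    rw [hext] at this
    simpa [j.2] using this
  have hle : Fintype.card {j : Fin d // j ∉ s} ≤ Fintype.card {i : Fin d // i ∉ T} := by
    have := LinearMap.finrank_le_finrank_of_injective hGinj
    simpa [Module.finrank_fintype_fun_eq_card] using this
  have hcs : Fintype.card {j : Fin d // j ∉ s} = d - s.card := by
    simp [Fintype.card_subtype_compl, Fintype.card_coe]
  have hcT : Fintype.card {i : Fin d // i ∉ T} = d - T.card := by
    simp [Fintype.card_subtype_compl, Fintype.card_coe]
  -- `s` is strictly smaller than `d - k`.
  have hscard : s.card < d - k := by
    rcases lt_or_eq_of_le (hS₁ ▸ Finset.card_le_card (Finset.inter_subset_left (s₂ := S₂)))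
      with hlt | heq
    · exact hlt
    · exfalso
      have h1 : s = S₁ :=
        Finset.eq_of_subset_of_card_le Finset.inter_subset_left (by omega)
      have hsub : S₁ ⊆ S₂ := by
        intro a ha
        have : a ∈ s := h1 ▸ ha
        exact (Finset.mem_inter.mp this).2
      exact hS (Finset.eq_of_subset_of_card_le hsub (by omega))
  rw [hcs, hcT, hT] at hle
  omega
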